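/- Let v¹,…,vⁿ be an orthonormal basis of ℝⁿ, d₀, d₁ ∈ ℝⁿ, α₁,…,αₙ > 0, λ ∈ [0,1], and for i = 1,…,n let μᵢ ∈ [0,1] satisfy 1 - (1-λ)αᵢ^λ ≤ μᵢ ≤ λαᵢ^(λ-1). Define E_λ = {x : ∑ᵢ ⟨x,vⁱ⟩²/αᵢ^(2λ) ≤ 1} and d_λ = ∑ᵢ((1-μᵢ)⟨d₀,vⁱ⟩ + μᵢ⟨d₁,vⁱ⟩)vⁱ. Then (E_0 + d₀) ∩ (E_1 + d₁) ⊆ E_λ + d_λ. -/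

import Mathlib

open scoped RealInnerProductSpace Pointwise

/-- The geometric mean ellipsoid `E_l` with principal axes `v i` and half-lengths `(α i)^l`. -/
def meanEllipsoid {n : ℕ} (v : Fin n → EuclideanSpace ℝ (Fin n)) (α : Fin n → ℝ) (l : ℝ) :
    Set (EuclideanSpace ℝ (Fin n)) :=
  {x | ∑ i, ⟪x, v i⟫ ^ 2 / (α i) ^ (2 * l) ≤ 1}

lemma key_ineq (l p q a c : ℝ) (hl0 : 0 ≤ l) (hl1 : l ≤ 1) (hp0 : 0 ≤ p) (hp : p ≤ 1 - l)
    (hq0 : 0 ≤ q) (hq : q ≤ l) : (p * a + q * c) ^ 2 ≤ (1 - l) * a ^ 2 + l * c ^ 2 := by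
  have habs : |p * a + q * c| ≤ (1 - l) * |a| + l * |c| := by
    refine (abs_add_le _ _).trans ?_
    rw [abs_mul, abs_mul, abs_of_nonneg hp0, abs_of_nonneg hq0]
    gcongr <;> positivity
  have h1 : (p * a + q * c) ^ 2 ≤ ((1 - l) * |a| + l * |c|) ^ 2 := by
    rw [← sq_abs]
    exact pow_le_pow_left₀ (abs_nonneg _) habs 2
  refine h1.trans ?_
  nlinarith [sq_abs a, sq_abs c, sq_nonneg (|a| - |c|),
    mul_nonneg (mul_nonneg hl0 (sub_nonneg.2 hl1)) (sq_nonneg (|a| - |c|))]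

theorem stmt_10 {n : ℕ} (v : Fin n → EuclideanSpace ℝ (Fin n))
    (hv : Orthonormal ℝ v) (hv' : Submodule.span ℝ (Set.range v) = ⊤)
    (d₀ d₁ : EuclideanSpace ℝ (Fin n))
    (α : Fin n → ℝ) (hα : ∀ i, 0 < α i) (l : ℝ) (hl : l ∈ Set.Icc (0:ℝ) 1)
    (μ : Fin n → ℝ) (hμ : ∀ i, μ i ∈ Set.Icc (0:ℝ) 1)
    (hμ1 : ∀ i, 1 - (1 - l) * (α i) ^ l ≤ μ i) (hμ2 : ∀ i, μ i ≤ l * (α i) ^ (l - 1))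
    (dl : EuclideanSpace ℝ (Fin n))
    (hdl : dl = ∑ i, ((1 - μ i) * ⟪d₀, v i⟫ + μ i * ⟪d₁, v i⟫) • v i) :
    (meanEllipsoid v α 0 + ({d₀} : Set (EuclideanSpace ℝ (Fin n)))) ∩
        (meanEllipsoid v α 1 + ({d₁} : Set (EuclideanSpace ℝ (Fin n)))) ⊆
      meanEllipsoid v α l + ({dl} : Set (EuclideanSpace ℝ (Fin n))) := by
  obtain ⟨hl0, hl1⟩ := hl
  rintro x ⟨hx0, hx1⟩
  simp only [Set.mem_add, Set.mem_singleton_iff, meanEllipsoid, Set.mem_setOf_eq] at hx0 hx1 ⊢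
  obtain ⟨y, hy, w, hw, hyx⟩ := hx0
  obtain ⟨z, hz, u, hu, hzx⟩ := hx1
  rw [hw] at hyx
  rw [hu] at hzx
  have hyd : y = x - d₀ := eq_sub_of_add_eq hyx
  have hzd : z = x - d₁ := eq_sub_of_add_eq hzx
  rw [hyd] at hy
  rw [hzd] at hz
  refine ⟨x - dl, ?_, dl, rfl, by abel⟩
  have hvij := orthonormal_iff_ite.mp hv
  have hdli : ∀ i, ⟪dl, v i⟫ = (1 - μ i) * ⟪d₀, v i⟫ + μ i * ⟪d₁, v i⟫ := by
    intro i
    rw [hdl, sum_inner]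
    simp only [real_inner_smul_left, hvij, mul_ite, mul_one, mul_zero]
    simp
  have hterm : ∀ i, ⟪x - dl, v i⟫ = (1 - μ i) * ⟪x - d₀, v i⟫ + μ i * ⟪x - d₁, v i⟫ := by
    intro i
    simp only [inner_sub_left, hdli i]
    ring
  calc ∑ i, ⟪x - dl, v i⟫ ^ 2 / (α i) ^ (2 * l)
      ≤ ∑ i, ((1 - l) * (⟪x - d₀, v i⟫ ^ 2 / (α i) ^ (2 * (0:ℝ)))
              + l * (⟪x - d₁, v i⟫ ^ 2 / (α i) ^ (2 * (1:ℝ)))) := by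
        apply Finset.sum_le_sum
        intro i _
        set a := ⟪x - d₀, v i⟫
        set b := ⟪x - d₁, v i⟫
        have hA : (0 : ℝ) < α i := hα i
        have hAl : (0 : ℝ) < (α i) ^ l := Real.rpow_pos_of_pos hA l
        have h2l : (α i) ^ (2 * l) = ((α i) ^ l) ^ 2 := by
          rw [sq, ← Real.rpow_add hA]; ring_nf
        rw [hterm i, h2l,
          show (2 * (0:ℝ)) = 0 by norm_num, Real.rpow_zero, div_one,
          show (2 * (1:ℝ)) = 2 by norm_num, Real.rpow_two]
        have hexpand : ((1 - μ i) * a + μ i * b) ^ 2 / ((α i) ^ l) ^ 2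
            = (((1 - μ i) / (α i) ^ l) * a + (μ i * (α i) ^ (1 - l)) * (b / α i)) ^ 2 := by
          rw [← div_pow]
          congr 1
          have h1l : (α i) ^ ((1:ℝ) - l) = α i / (α i) ^ l := by
            rw [Real.rpow_sub hA, Real.rpow_one]
          rw [h1l]
          field_simp
        rw [hexpand]
        have hbb : l * (b ^ 2 / (α i) ^ 2) = l * (b / α i) ^ 2 := by rw [div_pow]
        rw [hbb]
        apply key_ineq _ _ _ _ _ hl0 hl1
        · exact div_nonneg (by linarith [(hμ i).2]) hAl.le
        · rw [div_le_iff₀ hAl]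
          linarith [hμ1 i]
        · exact mul_nonneg (hμ i).1 (Real.rpow_nonneg hA.le _)
        · have h := hμ2 i
          calc μ i * (α i) ^ ((1:ℝ) - l)
              ≤ l * (α i) ^ (l - 1) * (α i) ^ ((1:ℝ) - l) := by
                exact mul_le_mul_of_nonneg_right h (Real.rpow_nonneg hA.le _)
            _ = l := by
                rw [mul_assoc, ← Real.rpow_add hA]
                norm_num
    _ = (1 - l) * ∑ i, ⟪x - d₀, v i⟫ ^ 2 / (α i) ^ (2 * (0:ℝ))
        + l * ∑ i, ⟪x - d₁, v i⟫ ^ 2 / (α i) ^ (2 * (1:ℝ)) := by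
        rw [Finset.sum_add_distrib, Finset.mul_sum, Finset.mul_sum]
    _ ≤ 1 := by
        have h0 := mul_le_mul_of_nonneg_left hy (by linarith : (0:ℝ) ≤ 1 - l)
        have h1 := mul_le_mul_of_nonneg_left hz hl0
        linarith
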